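/- Let A ∈ ℝ^{m×n}, b ∈ range(A) (so Ax = b is a fixed consistent system), and set x_LS = A†b. Let Ã ∈ ℝ^{m×n} have all rows nonzero, b̃ ∈ ℝᵐ, E = Ã − A, ε = b̃ − b. Let {x_k} be the RK iterates for the doubly noisy system Ãx ≈ b̃ with initial point x_0 satisfying x_0 − x_LS ∈ range(Ãᵀ). Then for every k ≥ 0: 𝔼‖x_k − x_LS‖² ≤ (1 − σ̃_min²/‖Ã‖_F²)^k ‖x_0 − x_LS‖² + ‖E x_LS − ε‖²/σ̃_min², where σ̃_min is the smallest nonzero singular value of Ã. -/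

import Mathlib

open Matrix

noncomputable section

namespace RK

/-- The Euclidean inner product on `Fin n → ℝ`. -/
def dot {n : ℕ} (v w : Fin n → ℝ) : ℝ := ∑ i, v i * w i

/-- The squared Euclidean norm on `Fin n → ℝ`. -/
def normSq {n : ℕ} (v : Fin n → ℝ) : ℝ := ∑ i, v i ^ 2

/-- The Euclidean norm on `Fin n → ℝ`. -/
def euclNorm {n : ℕ} (v : Fin n → ℝ) : ℝ := Real.sqrt (normSq v)

/-- The squared Frobenius norm of a matrix. -/
def frobSq {m n : ℕ} (A : Matrix (Fin m) (Fin n) ℝ) : ℝ := ∑ i, ∑ j, A i j ^ 2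

/-- One step of the (randomized) Kaczmarz method for the system `A x ≈ b`, using row `i`:
`x ↦ x - ((aᵢᵀ x - bᵢ) / ‖aᵢ‖²) aᵢ`. -/
def rkStep {m n : ℕ} (A : Matrix (Fin m) (Fin n) ℝ) (b : Fin m → ℝ) (i : Fin m)
    (x : Fin n → ℝ) : Fin n → ℝ :=
  x - ((dot (A i) x - b i) / normSq (A i)) • A i

/-- `rkExp A b x0 k f` is the expectation `𝔼 f(x_k)` of `f` evaluated at the `k`-th iterate of the
randomized Kaczmarz algorithm applied to `A x ≈ b` started at `x0`, where at each step the row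
index `i` is drawn independently at random with probability `‖aᵢ‖² / ‖A‖_F²`. -/
def rkExp {m n : ℕ} (A : Matrix (Fin m) (Fin n) ℝ) (b : Fin m → ℝ) (x0 : Fin n → ℝ) :
    ℕ → ((Fin n → ℝ) → ℝ) → ℝ
  | 0, f => f x0
  | k + 1, f => rkExp A b x0 k fun x => ∑ i, normSq (A i) / frobSq A * f (rkStep A b i x)

/-- The four Penrose conditions: `B` is the Moore–Penrose pseudoinverse of `A`. -/
def IsMoorePenrose {m n : ℕ} (A : Matrix (Fin m) (Fin n) ℝ)
    (B : Matrix (Fin n) (Fin m) ℝ) : Prop :=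
  A * B * A = A ∧ B * A * B = B ∧ (A * B)ᵀ = A * B ∧ (B * A)ᵀ = B * A

/-- The row space `range(Aᵀ)` of a matrix `A`. -/
def rowSpace {m n : ℕ} (A : Matrix (Fin m) (Fin n) ℝ) : Set (Fin n → ℝ) :=
  {v | ∃ u : Fin m → ℝ, v = Aᵀ.mulVec u}

/-- The null space (kernel) of a matrix `A`. -/
def nullSpace {m n : ℕ} (A : Matrix (Fin m) (Fin n) ℝ) : Set (Fin n → ℝ) :=
  {v | A.mulVec v = 0}

/-- `σ` is the smallest nonzero singular value of `A`: `σ > 0`, `σ²` is an eigenvalue of `AᵀA`,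
and `σ²` is less than or equal to every nonzero eigenvalue of `AᵀA`. -/
def IsSmallestNonzeroSingularValue {m n : ℕ} (A : Matrix (Fin m) (Fin n) ℝ) (σ : ℝ) : Prop :=
  0 < σ ∧ (∃ v : Fin n → ℝ, v ≠ 0 ∧ (Aᵀ * A).mulVec v = σ ^ 2 • v) ∧
    ∀ μ : ℝ, μ ≠ 0 → (∃ v : Fin n → ℝ, v ≠ 0 ∧ (Aᵀ * A).mulVec v = μ • v) → σ ^ 2 ≤ μ

/-! ### Auxiliary lemmas -/

lemma normSq_nonneg {n : ℕ} (v : Fin n → ℝ) : 0 ≤ normSq v :=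
  Finset.sum_nonneg fun _ _ => sq_nonneg _

lemma normSq_eq_zero_iff {n : ℕ} (v : Fin n → ℝ) : normSq v = 0 ↔ v = 0 := by
  constructor
  · intro h
    funext i
    have := (Finset.sum_eq_zero_iff_of_nonneg (fun j _ => sq_nonneg (v j))).mp h i
      (Finset.mem_univ i)
    exact pow_eq_zero_iff (two_ne_zero) |>.mp this
  · rintro rfl; simp [normSq]

lemma normSq_pos_of_ne_zero {n : ℕ} {v : Fin n → ℝ} (h : v ≠ 0) : 0 < normSq v :=
  lt_of_le_of_ne (normSq_nonneg v) fun h' => h ((normSq_eq_zero_iff v).mp h'.symm)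

lemma mulVec_apply_eq_dot {m n : ℕ} (M : Matrix (Fin m) (Fin n) ℝ) (v : Fin n → ℝ) (i : Fin m) :
    M.mulVec v i = dot (M i) v := rfl

lemma dot_transpose_mulVec {m n : ℕ} (B : Matrix (Fin m) (Fin n) ℝ) (a : Fin n → ℝ)
    (w : Fin m → ℝ) : dot a (Bᵀ.mulVec w) = dot (B.mulVec a) w := by
  show a ⬝ᵥ (Bᵀ *ᵥ w) = (B *ᵥ a) ⬝ᵥ w
  rw [Matrix.dotProduct_mulVec, Matrix.vecMul_transpose]

lemma dot_gram {m n : ℕ} (At : Matrix (Fin m) (Fin n) ℝ) (z : Fin n → ℝ) :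
    dot z ((Atᵀ * At).mulVec z) = normSq (At.mulVec z) := by
  show z ⬝ᵥ ((Atᵀ * At) *ᵥ z) = _
  rw [← Matrix.mulVec_mulVec, Matrix.dotProduct_mulVec, Matrix.vecMul_transpose]
  simp [dotProduct, normSq, sq]

lemma mulVec_sum {m n : ℕ} (M : Matrix (Fin m) (Fin n) ℝ) (f : Fin n → (Fin n → ℝ)) :
    M.mulVec (∑ j, f j) = ∑ j, M.mulVec (f j) := by
  funext i
  simp [Matrix.mulVec, dotProduct, Finset.sum_apply, Finset.mul_sum]
  exact Finset.sum_comm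

lemma dot_sum_right {n : ℕ} (v : Fin n → ℝ) (f : Fin n → (Fin n → ℝ)) :
    dot v (∑ j, f j) = ∑ j, dot v (f j) := by
  simp [dot, Finset.sum_apply, Finset.mul_sum]
  exact Finset.sum_comm

lemma dot_smul_right {n : ℕ} (v w : Fin n → ℝ) (c : ℝ) : dot v (c • w) = c * dot v w := by
  simp only [dot, Pi.smul_apply, smul_eq_mul, Finset.mul_sum]
  exact Finset.sum_congr rfl fun i _ => by ring

lemma dot_comm {n : ℕ} (v w : Fin n → ℝ) : dot v w = dot w v := by
  simp [dot, mul_comm]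

lemma dot_sum_left {n : ℕ} (f : Fin n → (Fin n → ℝ)) (w : Fin n → ℝ) :
    dot (∑ j, f j) w = ∑ j, dot (f j) w := by
  rw [dot_comm, dot_sum_right]
  exact Finset.sum_congr rfl fun j _ => dot_comm _ _

lemma dot_smul_left {n : ℕ} (v w : Fin n → ℝ) (c : ℝ) : dot (c • v) w = c * dot v w := by
  rw [dot_comm, dot_smul_right, dot_comm]

lemma dot_sub_right {n : ℕ} (v w x : Fin n → ℝ) : dot v (w - x) = dot v w - dot v x := by
  simp [dot, Finset.sum_sub_distrib, mul_sub]

lemma dot_ortho_sum {n : ℕ} (u : Fin n → (Fin n → ℝ))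
    (hu : ∀ i j, dot (u i) (u j) = if i = j then 1 else 0) (c d : Fin n → ℝ) :
    dot (∑ j, c j • u j) (∑ k, d k • u k) = ∑ j, c j * d j := by
  rw [dot_sum_left]
  refine Finset.sum_congr rfl fun j _ => ?_
  rw [dot_smul_left, dot_sum_right]
  rw [Finset.sum_eq_single j]
  · rw [dot_smul_right, hu j j]; simp
  · intro k _ hk
    rw [dot_smul_right, hu j k, if_neg (Ne.symm hk)]; simp
  · intro h; exact absurd (Finset.mem_univ j) h

/-- The key spectral inequality: on the row space of `At`,
`‖At z‖² ≥ σ² ‖z‖²` for `σ` the smallest nonzero singular value. -/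
lemma key_spectral {m n : ℕ} (At : Matrix (Fin m) (Fin n) ℝ) (σ : ℝ)
    (hσ : IsSmallestNonzeroSingularValue At σ) {z : Fin n → ℝ} (hz : z ∈ rowSpace At) :
    σ ^ 2 * normSq z ≤ normSq (At.mulVec z) := by
  obtain ⟨w, hzw⟩ := hz
  have hM : (Atᵀ * At).IsHermitian := by simpa using isHermitian_conjTranspose_mul_self At
  set b := hM.eigenvectorBasis with hb
  set μ := hM.eigenvalues with hμ
  set u : Fin n → (Fin n → ℝ) := fun j => (b j : EuclideanSpace ℝ (Fin n)) with hu
  have hu_eig : ∀ j, (Atᵀ * At).mulVec (u j) = μ j • u j := fun j =>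
    hM.mulVec_eigenvectorBasis j
  have hu_on : ∀ i j, dot (u i) (u j) = if i = j then 1 else 0 := by
    intro i j
    have h := orthonormal_iff_ite.mp b.orthonormal i j
    rw [dot_comm]
    simpa [dot, PiLp.inner_apply, hu] using h
  set c : Fin n → ℝ := fun j => dot (u j) z with hc
  -- expansion of z in the eigenbasis
  have hz_repr : z = ∑ j, c j • u j := by
    have h := b.sum_repr' (WithLp.toLp 2 z)
    have h2 : ∀ j, (inner ℝ (b j) (WithLp.toLp 2 z) : ℝ) = c j := by
      intro j; simp [hc, dot, PiLp.inner_apply, hu, mul_comm]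
    funext i
    have h3 := congrFun (congrArg (fun v : EuclideanSpace ℝ (Fin n) => (v : Fin n → ℝ)) h) i
    simp only [h2] at h3
    simpa [hu, Finset.sum_apply] using h3.symm
  -- coefficients on the null eigenvectors vanish
  have hc_zero : ∀ j, μ j = 0 → c j = 0 := by
    intro j hj
    have hAtu : At.mulVec (u j) = 0 := by
      have h1 : normSq (At.mulVec (u j)) = 0 := by
        rw [← dot_gram, hu_eig j, hj]
        simp [dot]
      exact (normSq_eq_zero_iff _).mp h1
    have h4 : c j = dot (At.mulVec (u j)) w := by
      rw [hc]
      simp only []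
      rw [hzw]
      exact dot_transpose_mulVec At (u j) w
    rw [h4, hAtu]; simp [dot]
  -- nonzero eigenvalues are at least σ²
  have hμ_ge : ∀ j, μ j ≠ 0 → σ ^ 2 ≤ μ j := by
    intro j hj
    refine hσ.2.2 (μ j) hj ⟨u j, ?_, hu_eig j⟩
    intro h0
    have h5 := hu_on j j
    simp [h0, dot] at h5
  have hnz : normSq z = ∑ j, c j * c j := by
    have h0 : normSq z = dot z z := by simp [normSq, dot, sq]
    rw [h0, hz_repr, dot_ortho_sum u hu_on c c]
  have hMz : (Atᵀ * At).mulVec z = ∑ j, (μ j * c j) • u j := by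
    conv_lhs => rw [hz_repr]
    rw [mulVec_sum]
    refine Finset.sum_congr rfl fun j _ => ?_
    rw [Matrix.mulVec_smul, hu_eig j, smul_smul, mul_comm (c j) (μ j)]
  have hquad : normSq (At.mulVec z) = ∑ j, c j * (μ j * c j) := by
    rw [← dot_gram, hMz, hz_repr, dot_ortho_sum u hu_on c (fun j => μ j * c j)]
  rw [hquad, hnz, Finset.mul_sum]
  refine Finset.sum_le_sum fun j _ => ?_
  by_cases hj : μ j = 0
  · rw [hc_zero j hj, hj]; simp
  · have h6 := hμ_ge j hj
    nlinarith [sq_nonneg (c j)]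

lemma frobSq_eq_sum_normSq {m n : ℕ} (A : Matrix (Fin m) (Fin n) ℝ) :
    frobSq A = ∑ i, normSq (A i) := rfl

lemma normSq_sub_smul {n : ℕ} (z a : Fin n → ℝ) (c : ℝ) :
    normSq (z - c • a) = normSq z - 2 * c * dot a z + c ^ 2 * normSq a := by
  have h : ∀ i, (z i - c * a i) ^ 2 = z i ^ 2 - 2 * c * (a i * z i) + c ^ 2 * a i ^ 2 :=
    fun i => by ring
  simp only [normSq, dot, Pi.sub_apply, Pi.smul_apply, smul_eq_mul, h,
    Finset.sum_add_distrib, Finset.sum_sub_distrib, Finset.mul_sum]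

/-- Membership in the row space is preserved by a Kaczmarz step (shifted by any point). -/
lemma rkStep_mem_rowSpace {m n : ℕ} (At : Matrix (Fin m) (Fin n) ℝ) (bt : Fin m → ℝ)
    (xLS : Fin n → ℝ) (i : Fin m) {y : Fin n → ℝ} (hy : y - xLS ∈ rowSpace At) :
    rkStep At bt i y - xLS ∈ rowSpace At := by
  obtain ⟨v, hv⟩ := hy
  set cst : ℝ := (dot (At i) y - bt i) / normSq (At i) with hcst
  refine ⟨v - cst • (Pi.single i (1:ℝ) : Fin m → ℝ), ?_⟩
  have hrow : Atᵀ.mulVec (Pi.single i (1:ℝ)) = At i := by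
    funext j
    simp [Matrix.mulVec, dotProduct, Pi.single_apply, mul_ite]
  have hsplit : rkStep At bt i y - xLS = (y - xLS) - cst • At i := by
    funext j; simp [rkStep, hcst]; ring
  rw [hsplit, hv, ← hrow, ← Matrix.mulVec_smul, ← Matrix.mulVec_sub]

lemma sum_probs {m n : ℕ} (At : Matrix (Fin m) (Fin n) ℝ) (hF : 0 < frobSq At) :
    ∑ i, normSq (At i) / frobSq At = 1 := by
  rw [← Finset.sum_div, ← frobSq_eq_sum_normSq, div_self (ne_of_gt hF)]

/-- One-step expected decrease. -/
lemma onestep {m n : ℕ} (At : Matrix (Fin m) (Fin n) ℝ) (bt : Fin m → ℝ)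
    (hrows : ∀ i, At i ≠ 0) (hF : 0 < frobSq At)
    (σ : ℝ) (hσ : IsSmallestNonzeroSingularValue At σ)
    (xLS : Fin n → ℝ) {y : Fin n → ℝ} (hy : y - xLS ∈ rowSpace At) :
    ∑ i, normSq (At i) / frobSq At * normSq (rkStep At bt i y - xLS)
      ≤ (1 - σ ^ 2 / frobSq At) * normSq (y - xLS)
        + normSq (At.mulVec xLS - bt) / frobSq At := by
  set z := y - xLS with hz
  set F := frobSq At with hFdef
  have hFne : F ≠ 0 := ne_of_gt hF
  have key : ∀ i, normSq (At i) / F * normSq (rkStep At bt i y - xLS)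
      = normSq (At i) / F * normSq z
        + ((dot (At i) xLS - bt i) ^ 2 - (dot (At i) z) ^ 2) / F := by
    intro i
    have hna : normSq (At i) ≠ 0 := ne_of_gt (normSq_pos_of_ne_zero (hrows i))
    have hstep : rkStep At bt i y - xLS
        = z - ((dot (At i) z + (dot (At i) xLS - bt i)) / normSq (At i)) • At i := by
      have h4 : dot (At i) z + (dot (At i) xLS - bt i) = dot (At i) y - bt i := by
        rw [hz, dot_sub_right]; ring
      rw [h4]
      funext j; simp [rkStep, hz]; ring
    rw [hstep, normSq_sub_smul]
    field_simp
    ring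
  rw [Finset.sum_congr rfl fun i _ => key i, Finset.sum_add_distrib]
  have h1 : ∑ i, normSq (At i) / F * normSq z = normSq z := by
    rw [← Finset.sum_mul, sum_probs At hF, one_mul]
  have h2 : ∑ i, ((dot (At i) xLS - bt i) ^ 2 - (dot (At i) z) ^ 2) / F
      = normSq (At.mulVec xLS - bt) / F - normSq (At.mulVec z) / F := by
    have ha : ∑ i, (dot (At i) xLS - bt i) ^ 2 = normSq (At.mulVec xLS - bt) := rfl
    have hb : ∑ i, (dot (At i) z) ^ 2 = normSq (At.mulVec z) := rfl
    rw [← Finset.sum_div, Finset.sum_sub_distrib, ha, hb, sub_div]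
  rw [h1, h2]
  have hspec : σ ^ 2 * normSq z ≤ normSq (At.mulVec z) := key_spectral At σ hσ hy
  have hdiv : σ ^ 2 * normSq z / F ≤ normSq (At.mulVec z) / F :=
    (div_le_div_iff_of_pos_right hF).mpr hspec
  have hexp : (1 - σ ^ 2 / F) * normSq z = normSq z - σ ^ 2 * normSq z / F := by ring
  linarith

/-- The main inductive bound on the expectation. -/
lemma rkExp_bound {m n : ℕ} (At : Matrix (Fin m) (Fin n) ℝ) (bt : Fin m → ℝ)
    (hrows : ∀ i, At i ≠ 0) (hF : 0 < frobSq At)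
    (σ : ℝ) (hσ : IsSmallestNonzeroSingularValue At σ) (hq0 : 0 ≤ 1 - σ ^ 2 / frobSq At)
    (xLS x0 : Fin n → ℝ) (hx0 : x0 - xLS ∈ rowSpace At) :
    ∀ (k : ℕ) (f : (Fin n → ℝ) → ℝ) (a cc : ℝ), 0 ≤ a →
      (∀ y, y - xLS ∈ rowSpace At → f y ≤ a * normSq (y - xLS) + cc) →
      rkExp At bt x0 k f ≤ a * ((1 - σ ^ 2 / frobSq At) ^ k * normSq (x0 - xLS)
        + (∑ j ∈ Finset.range k, (1 - σ ^ 2 / frobSq At) ^ j)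
            * (normSq (At.mulVec xLS - bt) / frobSq At)) + cc := by
  intro k
  induction k with
  | zero => intro f a cc ha hf; simpa [rkExp] using hf x0 hx0
  | succ k ih =>
    intro f a cc ha hf
    show rkExp At bt x0 k (fun x => ∑ i, normSq (At i) / frobSq At * f (rkStep At bt i x)) ≤ _
    have hkey : ∀ y, y - xLS ∈ rowSpace At →
        (∑ i, normSq (At i) / frobSq At * f (rkStep At bt i y))
          ≤ (a * (1 - σ ^ 2 / frobSq At)) * normSq (y - xLS)
            + (a * (normSq (At.mulVec xLS - bt) / frobSq At) + cc) := by
      intro y hy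
      have h1 : ∀ i ∈ Finset.univ, normSq (At i) / frobSq At * f (rkStep At bt i y)
          ≤ normSq (At i) / frobSq At * (a * normSq (rkStep At bt i y - xLS) + cc) := by
        intro i _
        have hp : 0 ≤ normSq (At i) / frobSq At := div_nonneg (normSq_nonneg _) hF.le
        exact mul_le_mul_of_nonneg_left (hf _ (rkStep_mem_rowSpace At bt xLS i hy)) hp
      have h2 : ∑ i, normSq (At i) / frobSq At * (a * normSq (rkStep At bt i y - xLS) + cc)
          = a * (∑ i, normSq (At i) / frobSq At * normSq (rkStep At bt i y - xLS)) + cc := by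
        rw [Finset.sum_congr rfl (fun i _ => by ring :
          ∀ i ∈ Finset.univ, normSq (At i) / frobSq At
              * (a * normSq (rkStep At bt i y - xLS) + cc)
            = a * (normSq (At i) / frobSq At * normSq (rkStep At bt i y - xLS))
              + normSq (At i) / frobSq At * cc)]
        rw [Finset.sum_add_distrib, ← Finset.mul_sum, ← Finset.sum_mul, sum_probs At hF, one_mul]
      have h3 := onestep At bt hrows hF σ hσ xLS hy
      calc ∑ i, normSq (At i) / frobSq At * f (rkStep At bt i y)
          ≤ ∑ i, normSq (At i) / frobSq At * (a * normSq (rkStep At bt i y - xLS) + cc) :=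
            Finset.sum_le_sum h1
        _ = a * (∑ i, normSq (At i) / frobSq At * normSq (rkStep At bt i y - xLS)) + cc := h2
        _ ≤ a * ((1 - σ ^ 2 / frobSq At) * normSq (y - xLS)
              + normSq (At.mulVec xLS - bt) / frobSq At) + cc := by
            exact add_le_add_left (mul_le_mul_of_nonneg_left h3 ha) cc
        _ = (a * (1 - σ ^ 2 / frobSq At)) * normSq (y - xLS)
              + (a * (normSq (At.mulVec xLS - bt) / frobSq At) + cc) := by ring
    have hmain := ih _ (a * (1 - σ ^ 2 / frobSq At))
      (a * (normSq (At.mulVec xLS - bt) / frobSq At) + cc) (mul_nonneg ha hq0) hkey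
    refine le_trans hmain (le_of_eq ?_)
    rw [geom_sum_succ]
    ring

/-- Cauchy–Schwarz bound: `‖At v‖² ≤ ‖At‖_F² ‖v‖²`. -/
lemma normSq_mulVec_le {m n : ℕ} (At : Matrix (Fin m) (Fin n) ℝ) (v : Fin n → ℝ) :
    normSq (At.mulVec v) ≤ frobSq At * normSq v := by
  have h : ∀ i, (At.mulVec v i) ^ 2 ≤ normSq (At i) * normSq v := by
    intro i
    exact Finset.sum_mul_sq_le_sq_mul_sq Finset.univ (At i) v
  calc normSq (At.mulVec v) = ∑ i, (At.mulVec v i) ^ 2 := rfl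
    _ ≤ ∑ i, normSq (At i) * normSq v := Finset.sum_le_sum fun i _ => h i
    _ = frobSq At * normSq v := by rw [← Finset.sum_mul, ← frobSq_eq_sum_normSq]

/-- **Theorem 1.3 (Bergou et al.).** For a fixed consistent system `Ax = b` with
`x_LS = A†b`, and RK applied to the doubly noisy system `Ãx ≈ b̃` (`E = Ã − A`, `ε = b̃ − b`)
with `x₀ − x_LS ∈ range(Ãᵀ)`:
`𝔼‖x_k − x_LS‖² ≤ (1 − σ̃_min²/‖Ã‖_F²)^k ‖x₀ − x_LS‖² + ‖E x_LS − ε‖²/σ̃_min²`. -/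
theorem rk_doubly_noisy_bergou {m n : ℕ}
    (At : Matrix (Fin m) (Fin n) ℝ) (bt : Fin m → ℝ)
    (hAt : At ≠ 0) (hrows : ∀ i, At i ≠ 0)
    (σmin : ℝ) (hσ : IsSmallestNonzeroSingularValue At σmin)
    (A : Matrix (Fin m) (Fin n) ℝ) (b : Fin m → ℝ)
    (hcons : ∃ x, A.mulVec x = b)
    (Ap : Matrix (Fin n) (Fin m) ℝ) (hAp : IsMoorePenrose A Ap)
    (x0 : Fin n → ℝ) (hx0 : x0 - Ap.mulVec b ∈ rowSpace At)
    (k : ℕ) :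
    rkExp At bt x0 k (fun y => normSq (y - Ap.mulVec b)) ≤
      (1 - σmin ^ 2 / frobSq At) ^ k * normSq (x0 - Ap.mulVec b)
        + normSq ((At - A).mulVec (Ap.mulVec b) - (bt - b)) / σmin ^ 2 := by
  set xLS := Ap.mulVec b with hxLS
  -- positivity of the Frobenius norm
  have hF : 0 < frobSq At := by
    have hAt' : ∃ i j, At i j ≠ 0 := by
      by_contra h
      push_neg at h
      exact hAt (by ext i j; simpa using h i j)
    obtain ⟨i, j, hij⟩ := hAt'
    have hrowpos : 0 < ∑ j', At i j' ^ 2 := by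
      have h5 : 0 < At i j ^ 2 := by positivity
      exact Finset.sum_pos' (fun j' _ => sq_nonneg _) ⟨j, Finset.mem_univ j, h5⟩
    exact Finset.sum_pos' (fun i' _ => Finset.sum_nonneg fun j' _ => sq_nonneg _)
      ⟨i, Finset.mem_univ i, hrowpos⟩
  have hFne : frobSq At ≠ 0 := ne_of_gt hF
  have hσpos : 0 < σmin := hσ.1
  have hσ2pos : 0 < σmin ^ 2 := by positivity
  -- σmin² ≤ ‖At‖_F²
  have hσF : σmin ^ 2 ≤ frobSq At := by
    obtain ⟨v, hv0, hveig⟩ := hσ.2.1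
    have hnv : 0 < normSq v := normSq_pos_of_ne_zero hv0
    have h1 : normSq (At.mulVec v) = σmin ^ 2 * normSq v := by
      rw [← dot_gram, hveig, dot_smul_right]
      congr 1
      simp [normSq, dot, sq]
    have h2 := normSq_mulVec_le At v
    rw [h1] at h2
    exact le_of_mul_le_mul_right (by linarith) hnv
  have hq0 : 0 ≤ 1 - σmin ^ 2 / frobSq At := by
    rw [sub_nonneg]
    exact (div_le_one hF).mpr hσF
  -- A x_LS = b
  have hAx : A.mulVec xLS = b := by
    obtain ⟨x, hx⟩ := hcons
    have h3 : A.mulVec xLS = (A * Ap * A).mulVec x := by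
      rw [hxLS, ← hx, Matrix.mulVec_mulVec, Matrix.mulVec_mulVec]
    rw [h3, hAp.1, hx]
  -- the noise vector
  have hnoise : (At - A).mulVec xLS - (bt - b) = At.mulVec xLS - bt := by
    rw [Matrix.sub_mulVec, hAx]
    abel
  -- main bound
  have hmain := rkExp_bound At bt hrows hF σmin hσ hq0 xLS x0 hx0 k
    (fun y => normSq (y - xLS)) 1 0 zero_le_one (fun y _ => by simp)
  rw [one_mul, add_zero] at hmain
  -- geometric sum bound
  set q := 1 - σmin ^ 2 / frobSq At with hq
  set S := ∑ j ∈ Finset.range k, q ^ j with hS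
  have hS0 : 0 ≤ S := Finset.sum_nonneg fun j _ => pow_nonneg hq0 j
  have hSsum : S * (1 - q) = 1 - q ^ k := by
    have := geom_sum_mul q k
    -- (∑ q^i) * (q - 1) = q^k - 1
    nlinarith [this]
  have hqk0 : 0 ≤ q ^ k := pow_nonneg hq0 k
  have h1q : 1 - q = σmin ^ 2 / frobSq At := by rw [hq]; ring
  have hSle : S * (σmin ^ 2 / frobSq At) ≤ 1 := by
    rw [← h1q, hSsum]; linarith
  set nr := normSq (At.mulVec xLS - bt) with hnr
  have hnr0 : 0 ≤ nr := normSq_nonneg _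
  have hgeo : S * (nr / frobSq At) ≤ nr / σmin ^ 2 := by
    rw [mul_div_assoc', div_le_div_iff₀ hF hσ2pos]
    have hexp : S * σmin ^ 2 ≤ frobSq At := by
      rw [mul_div_assoc'] at hSle
      exact (div_le_one hF).mp hSle
    nlinarith
  rw [hnoise]
  calc rkExp At bt x0 k (fun y => normSq (y - xLS))
      ≤ q ^ k * normSq (x0 - xLS) + S * (nr / frobSq At) := hmain
    _ ≤ q ^ k * normSq (x0 - xLS) + nr / σmin ^ 2 := by linarith

end RK
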